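/- Let G be a group generated by a finite set S = {g_1, ..., g_n} and let π be a unitary representation of G on a complex Hilbert space H. Then the following are equivalent: (i) for every finite subset F ⊆ G and every ε > 0 there exists a unit vector ξ ∈ H with ‖π(g)ξ − ξ‖ < ε for all g ∈ F (i.e., the trivial representation 1_G is weakly contained in π); (ii) for every nonzero z = (z_0, ..., z_n) ∈ ℂ^{n+1} with z_0 + z_1 + ⋯ + z_n = 0, the operator z_0 I + z_1π(g_1) + ⋯ + z_nπ(g_n) is not invertible (i.e., H_0 ⊆ p(A_π)). -/

import Mathlib

open scoped ComplexInnerProductSpace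

section Aux

variable {G : Type*} [Group G] {H : Type*} [NormedAddCommGroup H]
    [InnerProductSpace ℂ H] [CompleteSpace H]
    (π : G →* (H →L[ℂ] H)) (hπ : ∀ x, π x ∈ unitary (H →L[ℂ] H))

include hπ in
lemma aux_inner (x : G) (u v : H) : ⟪π x u, π x v⟫ = ⟪u, v⟫ := by
  have h := (Unitary.mem_iff.mp (hπ x)).1
  calc ⟪π x u, π x v⟫ = ⟪u, (ContinuousLinearMap.adjoint (π x)) (π x v)⟫ := by
        rw [ContinuousLinearMap.adjoint_inner_right]
    _ = ⟪u, (star (π x) * π x) v⟫ := by rw [ContinuousLinearMap.star_eq_adjoint]; rfl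
    _ = ⟪u, v⟫ := by rw [h]; rfl

include hπ in
lemma aux_norm (x : G) (u : H) : ‖π x u‖ = ‖u‖ := by
  have h := aux_inner π hπ x u u
  rw [@norm_eq_sqrt_re_inner ℂ, @norm_eq_sqrt_re_inner ℂ _ _ _ _ u, h]

omit [CompleteSpace H] in
lemma aux_pi_inv_apply (y : G) (ξ : H) : π y (π y⁻¹ ξ) = ξ := by
  calc π y (π y⁻¹ ξ) = (π y * π y⁻¹) ξ := rfl
    _ = ξ := by rw [← map_mul, mul_inv_cancel, map_one]; rfl

include hπ in
lemma aux_inv_norm (y : G) (ξ : H) : ‖π y⁻¹ ξ - ξ‖ = ‖π y ξ - ξ‖ := by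
  calc ‖π y⁻¹ ξ - ξ‖ = ‖π y (π y⁻¹ ξ - ξ)‖ := (aux_norm π hπ _ _).symm
    _ = ‖ξ - π y ξ‖ := by rw [map_sub, aux_pi_inv_apply]
    _ = ‖π y ξ - ξ‖ := norm_sub_rev _ _

include hπ in
lemma aux_move (x : G) (u v : H) : ⟪π x u, v⟫ = ⟪u, π x⁻¹ v⟫ := by
  conv_lhs => rw [← aux_pi_inv_apply π x v]
  rw [aux_inner π hπ]

include hπ in
lemma aux_word {n : ℕ} (g : Fin n → G)
    (hgen : Subgroup.closure (Set.range g) = ⊤) (x : G) :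
    ∃ C : ℝ, 0 ≤ C ∧ ∀ ξ : H, ‖π x ξ - ξ‖ ≤ C * ∑ i, ‖π (g i) ξ - ξ‖ := by
  have hx : x ∈ Subgroup.closure (Set.range g) := by rw [hgen]; trivial
  induction hx using Subgroup.closure_induction with
  | mem y hy =>
    obtain ⟨i, rfl⟩ := hy
    refine ⟨1, zero_le_one, fun ξ => ?_⟩
    rw [one_mul]
    exact Finset.single_le_sum (f := fun j => ‖π (g j) ξ - ξ‖)
      (fun j _ => norm_nonneg _) (Finset.mem_univ i)
  | one =>
    refine ⟨0, le_refl _, fun ξ => by simp⟩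
  | mul y z _ _ hy hz =>
    obtain ⟨Cy, hCy, hy⟩ := hy
    obtain ⟨Cz, hCz, hz⟩ := hz
    refine ⟨Cy + Cz, by positivity, fun ξ => ?_⟩
    have : π (y * z) ξ - ξ = π y (π z ξ - ξ) + (π y ξ - ξ) := by
      rw [map_mul]
      simp [ContinuousLinearMap.mul_apply, map_sub]
    calc ‖π (y * z) ξ - ξ‖ ≤ ‖π y (π z ξ - ξ)‖ + ‖π y ξ - ξ‖ := by
          rw [this]; exact norm_add_le _ _
      _ = ‖π z ξ - ξ‖ + ‖π y ξ - ξ‖ := by rw [aux_norm π hπ]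
      _ ≤ Cz * ∑ i, ‖π (g i) ξ - ξ‖ + Cy * ∑ i, ‖π (g i) ξ - ξ‖ :=
          add_le_add (hz ξ) (hy ξ)
      _ = (Cy + Cz) * ∑ i, ‖π (g i) ξ - ξ‖ := by ring
  | inv y _ hy =>
    obtain ⟨Cy, hCy, hy⟩ := hy
    exact ⟨Cy, hCy, fun ξ => by rw [aux_inv_norm π hπ]; exact hy ξ⟩

include hπ in
lemma aux_bound {n : ℕ} (f : Fin n → G) {δ : ℝ} (hδ : 0 < δ) (hn : 0 < n)
    (hb : ∀ ξ : H, ‖ξ‖ = 1 → δ ≤ ∑ i, ‖π (f i) ξ - ξ‖) :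
    ∀ ξ : H, (δ^2/(2*(n:ℝ)^2)) * ‖ξ‖ ≤
      ‖((n:ℂ) • (1 : H →L[ℂ] H) - ∑ i, π (f i)) ξ‖ := by
  set A : H →L[ℂ] H := (n:ℂ) • (1 : H →L[ℂ] H) - ∑ i, π (f i) with hAdef
  set c : ℝ := δ^2/(2*(n:ℝ)^2) with hcdef
  have hc : 0 < c := by positivity
  have hA : ∀ ξ : H, A ξ = (n:ℂ) • ξ - ∑ i, π (f i) ξ := by
    intro ξ
    simp [hAdef, ContinuousLinearMap.sub_apply, ContinuousLinearMap.smul_apply,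
      ContinuousLinearMap.sum_apply]
  have hre : ∀ (i : Fin n) (ξ : H),
      Complex.re ⟪π (f i) ξ, ξ⟫ = ‖ξ‖^2 - ‖π (f i) ξ - ξ‖^2 / 2 := by
    intro i ξ
    have := @norm_sub_sq ℂ H _ _ _ (π (f i) ξ) ξ
    rw [aux_norm π hπ] at this
    rw [RCLike.re_to_complex] at this
    linarith
  have key : ∀ ξ : H, Complex.re ⟪A ξ, ξ⟫ = ∑ i, ‖π (f i) ξ - ξ‖^2 / 2 := by
    intro ξ
    rw [hA ξ, inner_sub_left, inner_smul_left, sum_inner]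
    have h1 : ⟪ξ, ξ⟫ = ((‖ξ‖:ℂ))^2 := inner_self_eq_norm_sq_to_K ξ
    rw [h1]
    simp only [Complex.sub_re, Complex.re_sum, Complex.mul_re]
    rw [Finset.sum_congr rfl (fun i _ => hre i ξ)]
    have : ∑ i : Fin n, (‖ξ‖^2 - ‖π (f i) ξ - ξ‖^2 / 2)
        = (n:ℝ) * ‖ξ‖^2 - ∑ i : Fin n, ‖π (f i) ξ - ξ‖^2 / 2 := by
      rw [Finset.sum_sub_distrib, Finset.sum_const, Finset.card_univ, Fintype.card_fin,
        nsmul_eq_mul]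
    rw [this]
    have h2 : (starRingEnd ℂ) (n:ℂ) = (n:ℂ) := by simp
    rw [h2]
    simp only [← Complex.ofReal_pow, Complex.ofReal_re, Complex.ofReal_im,
      Complex.natCast_re, Complex.natCast_im]
    ring
  have unit : ∀ ξ : H, ‖ξ‖ = 1 → c ≤ ‖A ξ‖ := by
    intro ξ hξ
    have hsq : (δ/n)^2 ≤ ∑ i, ‖π (f i) ξ - ξ‖^2 := by
      by_contra hcon
      push_neg at hcon
      have hmax : ∀ i : Fin n, ‖π (f i) ξ - ξ‖ < δ/n := by
        intro i
        by_contra hi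
        push_neg at hi
        have : (δ/n)^2 ≤ ‖π (f i) ξ - ξ‖^2 := by
          apply pow_le_pow_left₀ (by positivity) hi
        have hle : ‖π (f i) ξ - ξ‖^2 ≤ ∑ j, ‖π (f j) ξ - ξ‖^2 :=
          Finset.single_le_sum (f := fun j => ‖π (f j) ξ - ξ‖^2)
            (fun j _ => sq_nonneg _) (Finset.mem_univ i)
        linarith
      have : ∑ i, ‖π (f i) ξ - ξ‖ < ∑ i : Fin n, δ/n :=
        Finset.sum_lt_sum_of_nonempty
          (by simp [Finset.univ_nonempty_iff, Fin.pos_iff_nonempty.mp hn])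
          (fun i _ => hmax i)
      rw [Finset.sum_const, Finset.card_univ, Fintype.card_fin, nsmul_eq_mul] at this
      have hd : (n:ℝ) * (δ/n) = δ := by field_simp
      rw [hd] at this
      exact absurd (hb ξ hξ) (not_le.mpr this)
    have hrec : c ≤ Complex.re ⟪A ξ, ξ⟫ := by
      rw [key ξ]
      have he : ∑ i, ‖π (f i) ξ - ξ‖^2 / 2 = (∑ i, ‖π (f i) ξ - ξ‖^2) / 2 := by
        rw [Finset.sum_div]
      rw [he, hcdef]
      have h4 : (δ/n)^2 = δ^2/(n:ℝ)^2 := by rw [div_pow]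
      rw [h4] at hsq
      have h3 : δ^2/(2*(n:ℝ)^2) = (δ^2/(n:ℝ)^2)/2 := by ring
      linarith
    calc c ≤ Complex.re ⟪A ξ, ξ⟫ := hrec
      _ ≤ ‖⟪A ξ, ξ⟫‖ := Complex.re_le_norm _
      _ ≤ ‖A ξ‖ * ‖ξ‖ := by
          exact norm_inner_le_norm _ _
      _ = ‖A ξ‖ := by rw [hξ, mul_one]
  intro ξ
  rcases eq_or_ne ξ 0 with rfl | hξ0
  · simp
  · have hnξ : (0:ℝ) < ‖ξ‖ := norm_pos_iff.mpr hξ0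
    set u : H := ((‖ξ‖ : ℂ))⁻¹ • ξ with hu
    have hunorm : ‖u‖ = 1 := by
      rw [hu, norm_smul, norm_inv, Complex.norm_real, Real.norm_eq_abs,
        abs_of_pos hnξ, inv_mul_cancel₀ (ne_of_gt hnξ)]
    have hAu : A u = ((‖ξ‖ : ℂ))⁻¹ • A ξ := by rw [hu, map_smul]
    have := unit u hunorm
    rw [hAu, norm_smul, norm_inv, Complex.norm_real, Real.norm_eq_abs,
      abs_of_pos hnξ] at this
    calc c * ‖ξ‖ ≤ (‖ξ‖⁻¹ * ‖A ξ‖) * ‖ξ‖ := by nlinarith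
      _ = ‖A ξ‖ := by field_simp

end Aux

lemma aux_isUnit {H : Type*} [NormedAddCommGroup H] [InnerProductSpace ℂ H] [CompleteSpace H]
    (A B : H →L[ℂ] H) {c : ℝ} (hc : 0 < c)
    (hA : ∀ ξ : H, c * ‖ξ‖ ≤ ‖A ξ‖) (hB : ∀ ξ : H, c * ‖ξ‖ ≤ ‖B ξ‖)
    (hAB : ∀ ξ η : H, ⟪A ξ, η⟫ = ⟪ξ, B η⟫) : IsUnit A := by
  have hanti : AntilipschitzWith (Real.toNNReal c⁻¹) A := by
    apply ContinuousLinearMap.antilipschitz_of_bound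
    intro x
    rw [Real.coe_toNNReal _ (by positivity)]
    calc ‖x‖ ≤ c⁻¹ * (c * ‖x‖) := by
          rw [← mul_assoc, inv_mul_cancel₀ (ne_of_gt hc), one_mul]
      _ ≤ c⁻¹ * ‖A x‖ := by
          apply mul_le_mul_of_nonneg_left (hA x) (by positivity)
  have hclosed : IsClosed (Set.range A) := hanti.isClosed_range A.uniformContinuous
  have hrange_eq : (LinearMap.range (A : H →ₗ[ℂ] H) : Set H) = Set.range A := LinearMap.coe_range (A : H →ₗ[ℂ] H)
  haveI : CompleteSpace (LinearMap.range (A : H →ₗ[ℂ] H)) :=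
    (show IsClosed (LinearMap.range (A : H →ₗ[ℂ] H) : Set H) from hrange_eq ▸ hclosed).completeSpace_coe
  have horth : (LinearMap.range (A : H →ₗ[ℂ] H))ᗮ = ⊥ := by
    rw [Submodule.eq_bot_iff]
    intro η hη
    rw [Submodule.mem_orthogonal] at hη
    have h0 : ⟪A (B η), η⟫ = 0 := hη _ (LinearMap.mem_range_self _ _)
    rw [hAB] at h0
    have hB0 : B η = 0 := inner_self_eq_zero.mp h0
    have := hB η
    rw [hB0, norm_zero] at this
    have : ‖η‖ ≤ 0 := by nlinarith
    exact norm_le_zero_iff.mp this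
  have hrange : LinearMap.range (A : H →ₗ[ℂ] H) = ⊤ := Submodule.orthogonal_eq_bot_iff.mp horth
  have hker : LinearMap.ker (A : H →ₗ[ℂ] H) = ⊥ :=
    LinearMap.ker_eq_bot_of_injective hanti.injective
  set e := ContinuousLinearEquiv.ofBijective A hker hrange with he
  have hcoe : ⇑e = ⇑A := ContinuousLinearEquiv.coeFn_ofBijective A hker hrange
  rw [isUnit_iff_exists]
  refine ⟨e.symm.toContinuousLinearMap, ?_, ?_⟩
  · ext x
    show A (e.symm x) = x
    rw [← hcoe]
    exact e.apply_symm_apply x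
  · ext x
    show e.symm (A x) = x
    rw [← hcoe]
    exact e.symm_apply_apply x

/-- For a unitary representation `π` of a finitely generated group `G = ⟨g₁, ..., gₙ⟩`, the
trivial representation is weakly contained in `π` (i.e. `π` almost has invariant vectors) iff
the hyperplane `H₀ = {z : z₀ + ⋯ + zₙ = 0}` is contained in the projective spectrum
`p(A_π)`. -/
theorem stmt8 {G : Type*} [Group G] (n : ℕ) (hn : 0 < n) (g : Fin n → G)
    (hgen : Subgroup.closure (Set.range g) = ⊤)
    {H : Type*} [NormedAddCommGroup H] [InnerProductSpace ℂ H] [CompleteSpace H]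
    (π : G →* (H →L[ℂ] H)) (hπ : ∀ x, π x ∈ unitary (H →L[ℂ] H)) :
    (∀ (F : Finset G) (ε : ℝ), 0 < ε → ∃ ξ : H, ‖ξ‖ = 1 ∧ ∀ x ∈ F, ‖π x ξ - ξ‖ < ε) ↔
      (∀ z : Fin (n + 1) → ℂ, z ≠ 0 → ∑ i, z i = 0 →
        ¬ IsUnit (z 0 • (1 : H →L[ℂ] H) + ∑ i : Fin n, z i.succ • π (g i))) := by
  classical
  constructor
  · -- (i) → (ii)
    intro hinv z hz hsum hunit
    set T : ℝ := ∑ i : Fin n, ‖z i.succ‖ with hTdef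
    by_cases hT : T = 0
    · -- then z = 0, contradiction
      have hall : ∀ i : Fin n, z i.succ = 0 := by
        intro i
        have h1 : ∀ j ∈ Finset.univ, (0:ℝ) ≤ ‖z (Fin.succ j)‖ := fun _ _ => norm_nonneg _
        have := (Finset.sum_eq_zero_iff_of_nonneg h1).mp hT i (Finset.mem_univ i)
        exact norm_eq_zero.mp this
      have hz0 : z 0 = 0 := by
        rw [Fin.sum_univ_succ] at hsum
        have h2 : ∑ i : Fin n, z i.succ = 0 := Finset.sum_eq_zero (fun i _ => hall i)
        rw [h2, add_zero] at hsum; exact hsum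
      apply hz
      funext j
      induction j using Fin.cases with
      | zero => exact hz0
      | succ i => exact hall i
    · have hT0 : 0 < T := lt_of_le_of_ne (by positivity) (Ne.symm hT)
      obtain ⟨u, hu⟩ := hunit
      set M : ℝ := ‖(↑u⁻¹ : H →L[ℂ] H)‖ with hMdef
      have hM : 0 ≤ M := norm_nonneg _
      set ε : ℝ := 1/(M*T+1) with hεdef
      have hε : 0 < ε := by positivity
      obtain ⟨ξ, hξ1, hξ2⟩ := hinv (Finset.image g Finset.univ) ε hε
      have hz0 : z 0 = -∑ i : Fin n, z i.succ := by
        rw [Fin.sum_univ_succ] at hsum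
        linear_combination hsum
      have hAξ : (z 0 • (1 : H →L[ℂ] H) + ∑ i : Fin n, z i.succ • π (g i)) ξ
          = ∑ i : Fin n, z i.succ • (π (g i) ξ - ξ) := by
        simp only [ContinuousLinearMap.add_apply, ContinuousLinearMap.smul_apply,
          ContinuousLinearMap.one_apply, ContinuousLinearMap.sum_apply, smul_sub]
        rw [Finset.sum_sub_distrib, ← Finset.sum_smul, hz0, neg_smul]
        abel
      have hnorm : ‖(z 0 • (1 : H →L[ℂ] H) + ∑ i : Fin n, z i.succ • π (g i)) ξ‖ ≤ T * ε := by
        rw [hAξ]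
        calc ‖∑ i : Fin n, z i.succ • (π (g i) ξ - ξ)‖
            ≤ ∑ i : Fin n, ‖z i.succ • (π (g i) ξ - ξ)‖ := norm_sum_le _ _
          _ = ∑ i : Fin n, ‖z i.succ‖ * ‖π (g i) ξ - ξ‖ := by
              simp [norm_smul]
          _ ≤ ∑ i : Fin n, ‖z i.succ‖ * ε := by
              refine Finset.sum_le_sum (fun i _ => ?_)
              refine mul_le_mul_of_nonneg_left ?_ (norm_nonneg _)
              exact le_of_lt (hξ2 (g i)
                (Finset.mem_image.mpr ⟨i, Finset.mem_univ i, rfl⟩))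
          _ = T * ε := by rw [← Finset.sum_mul]
      have hid : ξ = (↑u⁻¹ : H →L[ℂ] H)
          ((z 0 • (1 : H →L[ℂ] H) + ∑ i : Fin n, z i.succ • π (g i)) ξ) := by
        rw [← hu]
        calc ξ = ((↑u⁻¹ * ↑u : H →L[ℂ] H)) ξ := by rw [u.inv_mul]; rfl
          _ = (↑u⁻¹ : H →L[ℂ] H) ((↑u : H →L[ℂ] H) ξ) := rfl
      have hle : (1:ℝ) ≤ M * (T * ε) := by
        calc (1:ℝ) = ‖ξ‖ := hξ1.symm
          _ = ‖(↑u⁻¹ : H →L[ℂ] H)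
              ((z 0 • (1 : H →L[ℂ] H) + ∑ i : Fin n, z i.succ • π (g i)) ξ)‖ := by
              rw [← hid]
          _ ≤ M * ‖(z 0 • (1 : H →L[ℂ] H) + ∑ i : Fin n, z i.succ • π (g i)) ξ‖ :=
              ContinuousLinearMap.le_opNorm _ _
          _ ≤ M * (T * ε) := mul_le_mul_of_nonneg_left hnorm hM
      have hlt : M * (T * ε) < 1 := by
        rw [hεdef]
        rw [← mul_assoc, mul_one_div]
        rw [div_lt_one (by positivity)]
        linarith
      linarith
  · -- (ii) → (i), by contraposition
    intro hsp
    by_contra hcon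
    push_neg at hcon
    obtain ⟨F, ε, hε, hno⟩ := hcon
    -- word-length constants
    have hW := aux_word π hπ g hgen
    choose C hC0 hCb using hW
    set D : ℝ := 1 + ∑ x ∈ F, C x with hDdef
    have hD : 0 < D := by
      have : 0 ≤ ∑ x ∈ F, C x := Finset.sum_nonneg (fun x _ => hC0 x)
      linarith
    set δ : ℝ := ε / D with hδdef
    have hδ : 0 < δ := by positivity
    have hb : ∀ ξ : H, ‖ξ‖ = 1 → δ ≤ ∑ i, ‖π (g i) ξ - ξ‖ := by
      intro ξ hξ
      obtain ⟨x, hxF, hxε⟩ := hno ξ hξ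
      have h1 : ‖π x ξ - ξ‖ ≤ C x * ∑ i, ‖π (g i) ξ - ξ‖ := hCb x ξ
      have hCxD : C x ≤ D := by
        rw [hDdef]
        have := Finset.single_le_sum (f := fun y => C y) (fun y _ => hC0 y) hxF
        linarith
      have hS0 : 0 ≤ ∑ i, ‖π (g i) ξ - ξ‖ := Finset.sum_nonneg (fun i _ => norm_nonneg _)
      rw [hδdef, div_le_iff₀ hD]
      nlinarith
    have hb' : ∀ ξ : H, ‖ξ‖ = 1 → δ ≤ ∑ i, ‖π ((g i)⁻¹) ξ - ξ‖ := by
      intro ξ hξ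
      have : ∑ i, ‖π ((g i)⁻¹) ξ - ξ‖ = ∑ i, ‖π (g i) ξ - ξ‖ :=
        Finset.sum_congr rfl (fun i _ => aux_inv_norm π hπ (g i) ξ)
      rw [this]
      exact hb ξ hξ
    set c : ℝ := δ^2/(2*(n:ℝ)^2) with hcdef
    have hc : 0 < c := by positivity
    have hnA := aux_bound π hπ g hδ hn hb
    have hnB := aux_bound π hπ (fun i => (g i)⁻¹) hδ hn hb'
    set A : H →L[ℂ] H := (n:ℂ) • (1 : H →L[ℂ] H) - ∑ i, π (g i) with hAdef
    set B : H →L[ℂ] H := (n:ℂ) • (1 : H →L[ℂ] H) - ∑ i, π ((g i)⁻¹) with hBdef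
    have hAB : ∀ ξ η : H, ⟪A ξ, η⟫ = ⟪ξ, B η⟫ := by
      intro ξ η
      have hAξ : A ξ = (n:ℂ) • ξ - ∑ i, π (g i) ξ := by
        simp [hAdef, ContinuousLinearMap.sub_apply, ContinuousLinearMap.smul_apply,
          ContinuousLinearMap.sum_apply]
      have hBη : B η = (n:ℂ) • η - ∑ i, π ((g i)⁻¹) η := by
        simp [hBdef, ContinuousLinearMap.sub_apply, ContinuousLinearMap.smul_apply,
          ContinuousLinearMap.sum_apply]
      rw [hAξ, hBη, inner_sub_left, inner_sub_right, inner_smul_left, inner_smul_right,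
        sum_inner, inner_sum]
      have h2 : (starRingEnd ℂ) (n:ℂ) = (n:ℂ) := by simp
      rw [h2]
      congr 1
      exact Finset.sum_congr rfl (fun i _ => aux_move π hπ (g i) ξ η)
    have hU : IsUnit A := aux_isUnit A B hc hnA hnB hAB
    -- contradiction with hsp
    set z : Fin (n+1) → ℂ := Fin.cons (n:ℂ) (fun _ => (-1:ℂ)) with hzdef
    have hz : z ≠ 0 := by
      intro h
      have := congrFun h 0
      rw [hzdef] at this
      simp only [Fin.cons_zero, Pi.zero_apply] at this
      exact (Nat.cast_ne_zero (R := ℂ)).mpr hn.ne' this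
    have hsum : ∑ i, z i = 0 := by
      rw [Fin.sum_univ_succ]
      simp only [hzdef, Fin.cons_zero, Fin.cons_succ]
      rw [Finset.sum_const, Finset.card_univ, Fintype.card_fin, nsmul_eq_mul]
      ring
    have hop : z 0 • (1 : H →L[ℂ] H) + ∑ i : Fin n, z i.succ • π (g i) = A := by
      simp only [hzdef, Fin.cons_zero, Fin.cons_succ, neg_smul, one_smul, hAdef]
      rw [sub_eq_add_neg, ← Finset.sum_neg_distrib]
    exact hsp z hz hsum (hop ▸ hU)
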